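/- If p is a set partition word with exactly 2 distinct letters, then φ_{aba}(p) is sorted. -/

import Mathlib

/-- West's stack-sorting map, implemented with an explicit stack (top = head). -/
def sWestAux : List ℕ → List ℕ → List ℕ
  | [], st => st
  | x :: xs, [] => sWestAux xs [x]
  | x :: xs, t :: st =>
      if t < x then t :: sWestAux (x :: xs) st
      else sWestAux xs (x :: t :: st)
termination_by l st => 2 * l.length + st.length

def sWest (l : List ℕ) : List ℕ := sWestAux l []

/-- A word contains a subsequence equivalent to `aba`. -/
def HasABA (l : List ℕ) : Prop :=
  ∃ i j k : Fin l.length, i < j ∧ j < k ∧ l.get i = l.get k ∧ l.get j ≠ l.get i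

instance (l : List ℕ) : Decidable (HasABA l) := by
  unfold HasABA; infer_instance

/-- Xia's stack-sorting map φ_{aba}, with explicit stack (top = head). -/
def phiAux : List ℕ → List ℕ → List ℕ
  | [], st => st
  | x :: xs, [] => phiAux xs [x]
  | x :: xs, t :: st =>
      if HasABA (x :: t :: st) then t :: phiAux (x :: xs) st
      else phiAux xs (x :: t :: st)
termination_by l st => 2 * l.length + st.length

def phi (p : List ℕ) : List ℕ := phiAux p []

/-- A set partition word is sorted: all occurrences of each letter are consecutive. -/
def SortedWord (p : List ℕ) : Prop :=
  ∀ i j k : Fin p.length, i < j → j < k → p.get i = p.get k → p.get j = p.get i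

/-- Number of distinct letters. -/
def Nletters (p : List ℕ) : ℕ := p.toFinset.card

def Avoids231 (l : List ℕ) : Prop :=
  ¬ ∃ i j k : Fin l.length, i < j ∧ j < k ∧ l.get k < l.get i ∧ l.get i < l.get j



lemma getElem_twoBlock (x y m n : ℕ) (k : ℕ)
    (h : k < (List.replicate m x ++ List.replicate n y).length) :
    (List.replicate m x ++ List.replicate n y)[k] = if k < m then x else y := by
  by_cases hk : k < m
  · rw [List.getElem_append_left (by simpa using hk)]
    simp [hk]
  · rw [List.getElem_append_right (by simpa using hk)]
    simp [hk]

lemma sorted_twoBlock (x y m n : ℕ) :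
    SortedWord (List.replicate m x ++ List.replicate n y) := by
  intro i j k hij hjk hik
  simp only [List.get_eq_getElem] at *
  rw [getElem_twoBlock] at hik ⊢
  rw [getElem_twoBlock] at hik ⊢
  have hij' : (i : ℕ) < j := hij
  have hjk' : (j : ℕ) < k := hjk
  split_ifs at hik ⊢ with h1 h2 h3 <;> first | rfl | exact hik.symm | exact hik | omega

lemma not_hasABA_twoBlock (x y m n : ℕ) :
    ¬ HasABA (List.replicate m x ++ List.replicate n y) := by
  rintro ⟨i, j, k, hij, hjk, hik, hne⟩
  exact hne (sorted_twoBlock x y m n i j k hij hjk hik)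

lemma hasABA_pop (a b i j : ℕ) (hab : b ≠ a) (hi : 1 ≤ i) :
    HasABA (a :: (List.replicate (j+1) b ++ List.replicate i a)) := by
  refine ⟨⟨0, by simp⟩, ⟨1, by simp⟩, ⟨j+2, by simp; omega⟩,
    Fin.mk_lt_mk.mpr Nat.zero_lt_one, by simp [Fin.lt_def], ?_, ?_⟩
  · simp only [List.get_eq_getElem, List.getElem_cons_zero, List.getElem_cons_succ]
    rw [List.getElem_append_right (by simp)]
    simp
  · simp only [List.get_eq_getElem, List.getElem_cons_zero, List.getElem_cons_succ]
    rw [List.getElem_append_left (by simp)]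
    simp [hab]

lemma twoBlock_congr {x y m n m' n' : ℕ} (hm : m = m') (hn : n = n') :
    List.replicate m x ++ List.replicate n y = List.replicate m' x ++ List.replicate n' y := by
  subst hm; subst hn; rfl

lemma phiAux_two (a b : ℕ) (hab : b ≠ a) :
    ∀ (l : List ℕ), (∀ x ∈ l, x = a ∨ x = b) → ∀ i j, 1 ≤ i →
    phiAux l (List.replicate j b ++ List.replicate i a)
      = List.replicate (j + l.count b) b ++ List.replicate (i + l.count a) a := by
  intro l
  induction l with
  | nil => intro _ i j _; simp [phiAux]
  | cons x xs ih =>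
    intro hmem i j hi
    have ih' := ih (fun y hy => hmem y (List.mem_cons_of_mem _ hy))
    rcases hmem x List.mem_cons_self with hx | hx
    · -- x = a : push onto pure-a stack, or pop b's
      subst hx
      have hca : (x :: xs).count x = xs.count x + 1 := by simp [List.count_cons]
      have hcb : (x :: xs).count b = xs.count b := by simp [List.count_cons, hab, hab.symm]
      induction j with
      | zero =>
        obtain ⟨i', rfl⟩ : ∃ i', i = i' + 1 := ⟨i - 1, by omega⟩
        simp only [List.replicate_zero, List.nil_append, List.replicate_succ]
        rw [phiAux, if_neg]
        · have h2 := ih' (i' + 2) 0 (by omega)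
          simp only [List.replicate_zero, List.nil_append] at h2
          rw [show (x :: x :: List.replicate i' x) = List.replicate (i'+2) x by
                simp [List.replicate_succ], h2, hca, hcb]
          exact twoBlock_congr (by omega) (by omega)
        · have h3 := not_hasABA_twoBlock b x 0 (i'+2)
          simpa [List.replicate_succ] using h3
      | succ j' ihj =>
        have hstep : List.replicate (j'+1) b ++ List.replicate i x
            = b :: (List.replicate j' b ++ List.replicate i x) := by
          simp [List.replicate_succ]
        rw [hstep, phiAux, if_pos]
        · rw [ihj, hca, hcb]
          rw [show j' + 1 + xs.count b = (j' + xs.count b) + 1 by omega, List.replicate_succ]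
          simp
        · have h := hasABA_pop x b i j' hab hi
          rwa [hstep] at h
    · -- x = b : always push
      subst hx
      have hca : (x :: xs).count a = xs.count a := by simp [List.count_cons, hab.symm, hab]
      have hcb : (x :: xs).count x = xs.count x + 1 := by simp [List.count_cons]
      obtain ⟨i', rfl⟩ : ∃ i', i = i' + 1 := ⟨i - 1, by omega⟩
      rcases Nat.eq_zero_or_pos j with rfl | hj
      · simp only [List.replicate_zero, List.nil_append, List.replicate_succ]
        rw [phiAux, if_neg]
        · have h2 := ih' (i'+1) 1 (by omega)
          simp only [List.replicate_succ, List.replicate_zero, List.nil_append,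
            List.singleton_append, List.cons_append] at h2 ⊢
          rw [h2, hca, hcb]
          exact twoBlock_congr (by omega) (by omega)
        · have h3 := not_hasABA_twoBlock x a 1 (i'+1)
          simpa [List.replicate_succ] using h3
      · obtain ⟨j', rfl⟩ : ∃ j', j = j' + 1 := ⟨j - 1, by omega⟩
        rw [show List.replicate (j'+1) x ++ List.replicate (i'+1) a
              = x :: (List.replicate j' x ++ List.replicate (i'+1) a) by simp [List.replicate_succ]]
        rw [phiAux, if_neg]
        · have h2 := ih' (i'+1) (j'+2) (by omega)
          rw [show (x :: x :: (List.replicate j' x ++ List.replicate (i'+1) a))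
                = List.replicate (j'+2) x ++ List.replicate (i'+1) a by simp [List.replicate_succ]]
          rw [h2, hca, hcb]
          exact twoBlock_congr (by omega) (by omega)
        · rw [show (x :: x :: (List.replicate j' x ++ List.replicate (i'+1) a))
                = List.replicate (j'+2) x ++ List.replicate (i'+1) a by simp [List.replicate_succ]]
          exact not_hasABA_twoBlock x a (j'+2) (i'+1)

/-- Any word with exactly 2 distinct letters is sorted by one application of φ_{aba}. -/
theorem stmt10 (p : List ℕ) (h : Nletters p = 2) : SortedWord (phi p) := by
  obtain ⟨x, y, hxy, hset⟩ := Finset.card_eq_two.mp h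
  match p, hset with
  | [], hset =>
    have hx : x ∈ (∅ : Finset ℕ) := by
      rw [show (∅ : Finset ℕ) = List.toFinset [] by simp, hset]; simp
    simp at hx
  | hd :: tl, hset =>
    have hmemall : ∀ z ∈ hd :: tl, z = x ∨ z = y := by
      intro z hz
      have : z ∈ ({x, y} : Finset ℕ) := hset ▸ List.mem_toFinset.mpr hz
      simpa using this
    have hhd : hd = x ∨ hd = y := hmemall hd List.mem_cons_self
    -- a = hd, b = other
    obtain ⟨b, hb, hmem⟩ : ∃ b, b ≠ hd ∧ ∀ z ∈ tl, z = hd ∨ z = b := by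
      rcases hhd with rfl | rfl
      · exact ⟨y, fun hh => hxy hh.symm, fun z hz =>
          (hmemall z (List.mem_cons_of_mem _ hz))⟩
      · exact ⟨x, fun hh => hxy hh, fun z hz => (hmemall z (List.mem_cons_of_mem _ hz)).symm⟩
    have key := phiAux_two hd b hb tl hmem 1 0 le_rfl
    simp only [List.replicate_zero, List.nil_append, List.replicate_succ] at key
    rw [phi, phiAux, key]
    exact sorted_twoBlock b hd _ _
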